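/- The group SL₂(F₄) is isomorphic to the alternating group A₅. -/

import Mathlib

inductive F4 : Type
  | O | I | A | B
  deriving DecidableEq

instance : Fintype F4 :=
  ⟨⟨↑[F4.O, F4.I, F4.A, F4.B], by decide⟩, fun x => by cases x <;> decide⟩

namespace F4

def add : F4 → F4 → F4
  | O, x => x | x, O => x
  | I, I => O | I, A => B | I, B => A
  | A, I => B | A, A => O | A, B => I
  | B, I => A | B, A => I | B, B => O

def mul : F4 → F4 → F4
  | O, _ => O | _, O => O
  | I, x => x | x, I => x
  | A, A => B | A, B => I
  | B, A => I | B, B => A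

instance : Zero F4 := ⟨O⟩
instance : One F4 := ⟨I⟩
instance : Add F4 := ⟨add⟩
instance : Mul F4 := ⟨mul⟩
instance : Neg F4 := ⟨id⟩

instance : CommRing F4 where
  add_assoc := by decide
  zero_add := by decide
  add_zero := by decide
  add_comm := by decide
  neg_add_cancel := by decide
  mul_assoc := by decide
  one_mul := by decide
  mul_one := by decide
  mul_comm := by decide
  zero_mul := by decide
  mul_zero := by decide
  left_distrib := by decide
  right_distrib := by decide
  nsmul := nsmulRec
  zsmul := zsmulRec

instance : IsDomain F4 where
  mul_left_cancel_of_ne_zero := by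
    have key : ∀ a b c : F4, a ≠ 0 → a * b = a * c → b = c := by decide
    exact fun {a} ha b c h => key a b c ha h
  mul_right_cancel_of_ne_zero := by
    have key : ∀ a b c : F4, a ≠ 0 → b * a = c * a → b = c := by decide
    exact fun {a} ha b c h => key a b c ha h
  exists_pair_ne := ⟨O, I, by decide⟩

noncomputable instance : Field F4 := Fintype.fieldOfDomain F4

end F4

open F4 in
/-- representatives of the five points of the projective line over `F4` -/
def ptRep : Fin 5 → F4 × F4
  | 0 => (I, O) | 1 => (O, I) | 2 => (I, I) | 3 => (I, A) | 4 => (I, B)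

open F4 in
/-- the projective class of a nonzero vector -/
def toPt : F4 → F4 → Fin 5
  | O, _ => 1
  | I, O => 0 | I, I => 2 | I, A => 3 | I, B => 4
  | A, O => 0 | A, A => 2 | A, B => 3 | A, I => 4
  | B, O => 0 | B, B => 2 | B, I => 3 | B, A => 4

/-- action of a matrix `!![a,b;c,d]` on the projective line -/
def act' (a b c d : F4) (i : Fin 5) : Fin 5 :=
  toPt (a * (ptRep i).1 + b * (ptRep i).2) (c * (ptRep i).1 + d * (ptRep i).2)

theorem act'_left_inv : ∀ a b c d : F4, a * d - b * c = 1 →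
    ∀ i, act' d b c a (act' a b c d i) = i := by decide

theorem act'_right_inv : ∀ a b c d : F4, a * d - b * c = 1 →
    ∀ i, act' a b c d (act' d b c a i) = i := by decide

/-- the permutation of the projective line induced by a determinant-one matrix -/
def permOf (a b c d : F4) (h : a * d - b * c = 1) : Equiv.Perm (Fin 5) where
  toFun := act' a b c d
  invFun := act' d b c a
  left_inv i := act'_left_inv a b c d h i
  right_inv i := act'_right_inv a b c d h i

theorem act'_id : ∀ i, act' 1 0 0 1 i = i := by decide

set_option maxHeartbeats 4000000 in
theorem act'_mul : ∀ a b c d a' b' c' d' : F4, a * d - b * c = 1 → a' * d' - b' * c' = 1 →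
    ∀ i, act' (a*a'+b*c') (a*b'+b*d') (c*a'+d*c') (c*b'+d*d') i
      = act' a b c d (act' a' b' c' d' i) := by decide

theorem act'_inj : ∀ a b c d : F4, a * d - b * c = 1 → (∀ i, act' a b c d i = i) →
    a = 1 ∧ b = 0 ∧ c = 0 ∧ d = 1 := by decide

set_option maxHeartbeats 1000000 in
theorem permOf_sign : ∀ a b c d : F4, (h : a * d - b * c = 1) →
    Equiv.Perm.sign (permOf a b c d h) = 1 := by decide

abbrev G4 := Matrix.SpecialLinearGroup (Fin 2) F4

theorem det_entries (g : G4) :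
    g.1 0 0 * g.1 1 1 - g.1 0 1 * g.1 1 0 = 1 := by
  have := g.2
  rwa [Matrix.det_fin_two] at this

/-- the homomorphism from `SL₂(F₄)` to `S₅` -/
def φ₀ : G4 →* Equiv.Perm (Fin 5) where
  toFun g := permOf (g.1 0 0) (g.1 0 1) (g.1 1 0) (g.1 1 1) (det_entries g)
  map_one' := by
    refine Equiv.ext fun i => ?_
    show act' ((1 : Matrix (Fin 2) (Fin 2) F4) 0 0) ((1 : Matrix (Fin 2) (Fin 2) F4) 0 1)
      ((1 : Matrix (Fin 2) (Fin 2) F4) 1 0) ((1 : Matrix (Fin 2) (Fin 2) F4) 1 1) i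
        = (1 : Equiv.Perm (Fin 5)) i
    rw [Equiv.Perm.one_apply]
    have h00 : (1 : Matrix (Fin 2) (Fin 2) F4) 0 0 = 1 := by decide
    have h01 : (1 : Matrix (Fin 2) (Fin 2) F4) 0 1 = 0 := by decide
    have h10 : (1 : Matrix (Fin 2) (Fin 2) F4) 1 0 = 0 := by decide
    have h11 : (1 : Matrix (Fin 2) (Fin 2) F4) 1 1 = 1 := by decide
    rw [h00, h01, h10, h11]
    exact act'_id i
  map_mul' g h := by
    refine Equiv.ext fun i => ?_
    rw [Equiv.Perm.mul_apply]
    show act' _ _ _ _ i = act' _ _ _ _ (act' _ _ _ _ i)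
    have e : ∀ j k, (g * h).1 j k = g.1 j 0 * h.1 0 k + g.1 j 1 * h.1 1 k := by
      intro j k
      rw [Matrix.SpecialLinearGroup.coe_mul, Matrix.mul_apply, Fin.sum_univ_two]
    simp only [e]
    exact act'_mul _ _ _ _ _ _ _ _ (det_entries g) (det_entries h) i

theorem φ₀_inj : Function.Injective φ₀ := by
  rw [injective_iff_map_eq_one]
  intro g hg
  have h5 : ∀ i, act' (g.1 0 0) (g.1 0 1) (g.1 1 0) (g.1 1 1) i = i := by
    intro i
    exact congrFun (congrArg (fun (e : Equiv.Perm (Fin 5)) => (e : Fin 5 → Fin 5)) hg) i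
  obtain ⟨h1, h2, h3, h4⟩ := act'_inj _ _ _ _ (det_entries g) h5
  ext j k
  fin_cases j <;> fin_cases k <;>
    simpa [Matrix.SpecialLinearGroup.coe_one] using by assumption

theorem card_G4 : Fintype.card G4 = 60 := by decide

/-- the homomorphism into the alternating group -/
def φ : G4 →* alternatingGroup (Fin 5) :=
  φ₀.codRestrict (alternatingGroup (Fin 5)) fun g =>
    Equiv.Perm.mem_alternatingGroup.mpr (permOf_sign _ _ _ _ (det_entries g))

theorem φ_bij : Function.Bijective φ := by
  have hinj : Function.Injective φ := fun x y hxy => φ₀_inj (congrArg Subtype.val hxy)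
  have hcard : Fintype.card (alternatingGroup (Fin 5)) = 60 := by
    have h2 := @two_mul_card_alternatingGroup (Fin 5) _ _ _
    rw [Fintype.card_perm, Fintype.card_fin] at h2
    have : Nat.factorial 5 = 120 := rfl
    omega
  exact (Fintype.bijective_iff_injective_and_card φ).2 ⟨hinj, by rw [card_G4, hcard]⟩

/-- transporting `SL₂` along a ring isomorphism -/
def slMapEquiv {R S : Type*} [CommRing R] [CommRing S] (e : R ≃+* S) :
    Matrix.SpecialLinearGroup (Fin 2) R ≃* Matrix.SpecialLinearGroup (Fin 2) S where
  toFun := Matrix.SpecialLinearGroup.map e.toRingHom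
  invFun := Matrix.SpecialLinearGroup.map e.symm.toRingHom
  left_inv g := Subtype.ext (by
    ext i j
    simp [Matrix.SpecialLinearGroup.map_apply_coe])
  right_inv g := Subtype.ext (by
    ext i j
    simp [Matrix.SpecialLinearGroup.map_apply_coe])
  map_mul' := map_mul _

/-- `SL₂(F₄)` is isomorphic to the alternating group `A₅`. -/
theorem SL2_F4_iso_A5 :
    Nonempty (Matrix.SpecialLinearGroup (Fin 2) (GaloisField 2 2) ≃*
      alternatingGroup (Fin 5)) := by
  letI : Fintype (GaloisField 2 2) := Fintype.ofFinite _
  have hcard : Fintype.card (GaloisField 2 2) = Fintype.card F4 := by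
    rw [← Nat.card_eq_fintype_card, GaloisField.card (p := 2) (n := 2) (by norm_num)]
    decide
  exact ⟨(slMapEquiv (FiniteField.ringEquivOfCardEq hcard)).trans
    (MulEquiv.ofBijective φ φ_bij)⟩
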